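/- Error decomposition into encoder and forecaster error (Proposition A.5 / decomp_error): Let X be a measurable space, C a metric space equipped with a probability measure ν, and Y a normed vector space. For each c ∈ C let μ_c be a probability measure on X (the conditional data distribution of task c), measurable in c. Let f : X → Y be the measurable ground-truth forecasting map, let F : X × C → Y be a measurable forecaster, and let ĝ : X → C be a measurable encoder. Assume: (i) Lipschitz continuity of the forecaster in the task variable: there is γ ≥ 0 such that for all x ∈ X and all c, c' ∈ C, ‖F(x, c) − F(x, c')‖ ≤ γ · dist(c, c'); and (ii) the functions (c, x) ↦ dist(ĝ(x), c) and (c, x) ↦ ‖F(x, c) − f(x)‖ are integrable with respect to the measure ∫ μ_c dν(c). Then ∫_C ∫_X ‖F(x, ĝ(x)) − f(x)‖ dμ_c(x) dν(c) ≤ γ ∫_C ∫_X dist(ĝ(x), c) dμ_c(x) dν(c) + ∫_C ∫_X ‖F(x, c) − f(x)‖ dμ_c(x) dν(c); i.e., ε_X(F(·, ĝ(·))) ≤ γ · ε_enc(ĝ) + E_{c∼ν}[ ε_c(F(·, c)) ]. -/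
import Mathlib


open MeasureTheory ProbabilityTheory

/-- **Error decomposition into encoder and forecaster error** (Proposition A.5):
Let `X` be a measurable space, `C` a metric space equipped with a probability measure `ν`,
`Y` a normed vector space.  The conditional data distributions `μ_c` are given by a Markov
kernel `κ : Kernel C X` (a measurable family of probability measures).  If the forecaster
`F` is `γ`-Lipschitz in the task variable uniformly in `x`, and the functions
`(c, x) ↦ dist(ĝ(x), c)` and `(c, x) ↦ ‖F(x, c) − f(x)‖` are integrable with respect to
the measure `∫ μ_c dν(c)` (i.e. `ν ⊗ₘ κ`), then
`ε_X(F(·, ĝ(·))) ≤ γ · ε_enc(ĝ) + E_{c∼ν}[ε_c(F(·, c))]`. -/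
theorem error_decomposition_encoder_forecaster
    {X C Y : Type*} [MeasurableSpace X] [MeasurableSpace C] [MetricSpace C]
    [NormedAddCommGroup Y] [NormedSpace ℝ Y] [MeasurableSpace Y]
    (ν : Measure C) [IsProbabilityMeasure ν]
    (κ : Kernel C X) [IsMarkovKernel κ]
    (f : X → Y) (hf : Measurable f)
    (F : X → C → Y) (hF : Measurable fun p : X × C => F p.1 p.2)
    (ghat : X → C) (hghat : Measurable ghat)
    (γ : ℝ) (hγ : 0 ≤ γ)
    (hLip : ∀ (x : X) (c c' : C), ‖F x c - F x c'‖ ≤ γ * dist c c')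
    (hint₁ : Integrable (fun p : C × X => dist (ghat p.2) p.1) (ν ⊗ₘ κ))
    (hint₂ : Integrable (fun p : C × X => ‖F p.2 p.1 - f p.2‖) (ν ⊗ₘ κ)) :
    ∫ c, ∫ x, ‖F x (ghat x) - f x‖ ∂(κ c) ∂ν ≤
      γ * ∫ c, ∫ x, dist (ghat x) c ∂(κ c) ∂ν + ∫ c, ∫ x, ‖F x c - f x‖ ∂(κ c) ∂ν := by
  have h1 := (Measure.integrable_compProd_iff hint₁.aestronglyMeasurable).mp hint₁
  have h2 := (Measure.integrable_compProd_iff hint₂.aestronglyMeasurable).mp hint₂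
  -- pointwise bound
  have hpt : ∀ c x, ‖F x (ghat x) - f x‖ ≤ γ * dist (ghat x) c + ‖F x c - f x‖ := by
    intro c x
    calc ‖F x (ghat x) - f x‖ ≤ ‖F x (ghat x) - F x c‖ + ‖F x c - f x‖ :=
          norm_sub_le_norm_sub_add_norm_sub _ _ _
      _ ≤ γ * dist (ghat x) c + ‖F x c - f x‖ := by
          gcongr; exact hLip x (ghat x) c
  -- inner bound, a.e. c
  have hinner : ∀ᵐ c ∂ν, ∫ x, ‖F x (ghat x) - f x‖ ∂(κ c)
      ≤ γ * ∫ x, dist (ghat x) c ∂(κ c) + ∫ x, ‖F x c - f x‖ ∂(κ c) := by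
    filter_upwards [h1.1, h2.1] with c hc1 hc2
    have hRHS : Integrable (fun x => γ * dist (ghat x) c + ‖F x c - f x‖) (κ c) :=
      (hc1.const_mul γ).add hc2
    calc ∫ x, ‖F x (ghat x) - f x‖ ∂(κ c)
        ≤ ∫ x, (γ * dist (ghat x) c + ‖F x c - f x‖) ∂(κ c) := by
          apply integral_mono_of_nonneg
          · exact Filter.Eventually.of_forall fun x => norm_nonneg _
          · exact hRHS
          · exact Filter.Eventually.of_forall fun x => hpt c x
      _ = γ * ∫ x, dist (ghat x) c ∂(κ c) + ∫ x, ‖F x c - f x‖ ∂(κ c) := by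
          rw [integral_add (hc1.const_mul γ) hc2, integral_const_mul]
  -- outer integral
  have hO1 : Integrable (fun c => ∫ x, dist (ghat x) c ∂(κ c)) ν := by
    have := h1.2
    refine this.congr (Filter.Eventually.of_forall fun c => ?_)
    simp only [Real.norm_eq_abs]
    congr 1 with x
    exact abs_of_nonneg dist_nonneg
  have hO2 : Integrable (fun c => ∫ x, ‖F x c - f x‖ ∂(κ c)) ν := by
    have := h2.2
    refine this.congr (Filter.Eventually.of_forall fun c => ?_)
    simp [norm_norm]
  have hOR : Integrable (fun c => γ * ∫ x, dist (ghat x) c ∂(κ c) + ∫ x, ‖F x c - f x‖ ∂(κ c)) ν :=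
    (hO1.const_mul γ).add hO2
  calc ∫ c, ∫ x, ‖F x (ghat x) - f x‖ ∂(κ c) ∂ν
      ≤ ∫ c, (γ * ∫ x, dist (ghat x) c ∂(κ c) + ∫ x, ‖F x c - f x‖ ∂(κ c)) ∂ν := by
        apply integral_mono_of_nonneg
        · exact Filter.Eventually.of_forall fun c => integral_nonneg fun x => norm_nonneg _
        · exact hOR
        · exact hinner
    _ = γ * ∫ c, ∫ x, dist (ghat x) c ∂(κ c) ∂ν + ∫ c, ∫ x, ‖F x c - f x‖ ∂(κ c) ∂ν := by
        rw [integral_add (hO1.const_mul γ) hO2, integral_const_mul]
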